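/- Let d ≥ 1, ρ > 0, T > 0 and u ∈ ℝ^d, and let M_{ρ,u,T}(v) = ρ (2πT)^{-d/2} exp(−|v − u|²/(2T)) be the corresponding Maxwellian. Then M_{ρ,u,T} is a thermodynamic equilibrium of the collision process: Q(M_{ρ,u,T}, M_{ρ,u,T})(v) = 0 for every v ∈ ℝ^d. -/

import Mathlib

open MeasureTheory Real
open scoped InnerProductSpace

noncomputable section

/-- Post-collisional velocity `v' = v - ((v - v_*)·ω) ω`. -/
def vOut {d : ℕ} (v vs ω : EuclideanSpace ℝ (Fin d)) : EuclideanSpace ℝ (Fin d) :=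
  v - ⟪v - vs, ω⟫_ℝ • ω

/-- Post-collisional velocity `v'_* = v_* + ((v - v_*)·ω) ω`. -/
def vsOut {d : ℕ} (v vs ω : EuclideanSpace ℝ (Fin d)) : EuclideanSpace ℝ (Fin d) :=
  vs + ⟪v - vs, ω⟫_ℝ • ω

/-- Hard-sphere collision cross-section `b(v - v_*, ω) = ((v - v_*)·ω)_+`. -/
def bHS {d : ℕ} (v vs ω : EuclideanSpace ℝ (Fin d)) : ℝ := max ⟪v - vs, ω⟫_ℝ 0

/-- The surface measure `dω` on the unit sphere `S^{d-1} ⊆ ℝ^d`. -/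
def sphereMeasure (d : ℕ) : Measure (Metric.sphere (0 : EuclideanSpace ℝ (Fin d)) 1) :=
  (volume : Measure (EuclideanSpace ℝ (Fin d))).toSphere

/-- The hard-sphere Boltzmann collision operator
`Q(f,f)(v) = ∫∫ (f(v') f(v'_*) - f(v) f(v_*)) b(v - v_*, ω) dv_* dω`. -/
def Qcoll {d : ℕ} (f : EuclideanSpace ℝ (Fin d) → ℝ) (v : EuclideanSpace ℝ (Fin d)) : ℝ :=
  ∫ vs : EuclideanSpace ℝ (Fin d),
    ∫ ω : Metric.sphere (0 : EuclideanSpace ℝ (Fin d)) 1,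
      (f (vOut v vs ↑ω) * f (vsOut v vs ↑ω) - f v * f vs) * bHS v vs ↑ω ∂(sphereMeasure d)

/-- Conservation of energy under the collision transform. -/
lemma collision_energy {d : ℕ} (v vs u : EuclideanSpace ℝ (Fin d))
    (ω : EuclideanSpace ℝ (Fin d)) (hω : ‖ω‖ = 1) :
    ‖vOut v vs ω - u‖ ^ 2 + ‖vsOut v vs ω - u‖ ^ 2 = ‖v - u‖ ^ 2 + ‖vs - u‖ ^ 2 := by
  set c : ℝ := ⟪v - vs, ω⟫_ℝ with hc
  have h1 : vOut v vs ω - u = (v - u) - c • ω := by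
    simp only [vOut]; abel
  have h2 : vsOut v vs ω - u = (vs - u) + c • ω := by
    simp only [vsOut]; abel
  rw [h1, h2, norm_sub_sq_real, norm_add_sq_real]
  have hcω : ‖c • ω‖ ^ 2 = c ^ 2 := by
    rw [norm_smul, mul_pow, hω]; simp
  rw [hcω, real_inner_smul_right, real_inner_smul_right]
  have : ⟪v - u, ω⟫_ℝ - ⟪vs - u, ω⟫_ℝ = c := by
    have h3 : v - vs = (v - u) - (vs - u) := by abel
    simp only [hc, h3, inner_sub_left]
  linear_combination (-2*c) * this

/-- Every Maxwellian `M_{ρ,u,T}(v) = ρ (2πT)^{-d/2} exp(-|v-u|²/(2T))`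
is a thermodynamic equilibrium of the collision process: `Q(M,M) = 0`. -/
theorem maxwellian_is_equilibrium
    (d : ℕ) (hd : 1 ≤ d)
    (ρ T : ℝ) (hρ : 0 < ρ) (hT : 0 < T) (u : EuclideanSpace ℝ (Fin d)) :
    ∀ v : EuclideanSpace ℝ (Fin d),
      Qcoll (fun w => ρ * (2 * π * T) ^ (-(d : ℝ) / 2) *
        Real.exp (-‖w - u‖ ^ 2 / (2 * T))) v = 0 := by
  intro v
  have key : ∀ (vs : EuclideanSpace ℝ (Fin d))
      (ω : Metric.sphere (0 : EuclideanSpace ℝ (Fin d)) 1),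
      ((fun w => ρ * (2 * π * T) ^ (-(d : ℝ) / 2) * Real.exp (-‖w - u‖ ^ 2 / (2 * T)))
          (vOut v vs ↑ω) *
        (fun w => ρ * (2 * π * T) ^ (-(d : ℝ) / 2) * Real.exp (-‖w - u‖ ^ 2 / (2 * T)))
          (vsOut v vs ↑ω) -
        (fun w => ρ * (2 * π * T) ^ (-(d : ℝ) / 2) * Real.exp (-‖w - u‖ ^ 2 / (2 * T))) v *
        (fun w => ρ * (2 * π * T) ^ (-(d : ℝ) / 2) * Real.exp (-‖w - u‖ ^ 2 / (2 * T))) vs)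
        * bHS v vs ↑ω = 0 := by
    intro vs ω
    have hω : ‖(ω : EuclideanSpace ℝ (Fin d))‖ = 1 := by
      have := ω.2
      simpa [mem_sphere_iff_norm] using this
    have he := collision_energy v vs u ω hω
    have hexp : Real.exp (-‖vOut v vs ↑ω - u‖ ^ 2 / (2 * T)) *
        Real.exp (-‖vsOut v vs ↑ω - u‖ ^ 2 / (2 * T)) =
        Real.exp (-‖v - u‖ ^ 2 / (2 * T)) * Real.exp (-‖vs - u‖ ^ 2 / (2 * T)) := by
      rw [← Real.exp_add, ← Real.exp_add]
      congr 1
      field_simp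
      linear_combination (-1) * he
    simp only
    rw [mul_eq_zero]
    left
    linear_combination (ρ * (2 * π * T) ^ (-(d : ℝ) / 2)) *
      (ρ * (2 * π * T) ^ (-(d : ℝ) / 2)) * hexp
  simp only [Qcoll]
  calc (∫ vs : EuclideanSpace ℝ (Fin d),
      ∫ ω : Metric.sphere (0 : EuclideanSpace ℝ (Fin d)) 1,
        ((fun w => ρ * (2 * π * T) ^ (-(d : ℝ) / 2) * Real.exp (-‖w - u‖ ^ 2 / (2 * T)))
            (vOut v vs ↑ω) *
          (fun w => ρ * (2 * π * T) ^ (-(d : ℝ) / 2) * Real.exp (-‖w - u‖ ^ 2 / (2 * T)))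
            (vsOut v vs ↑ω) -
          (fun w => ρ * (2 * π * T) ^ (-(d : ℝ) / 2) * Real.exp (-‖w - u‖ ^ 2 / (2 * T))) v *
          (fun w => ρ * (2 * π * T) ^ (-(d : ℝ) / 2) * Real.exp (-‖w - u‖ ^ 2 / (2 * T))) vs)
          * bHS v vs ↑ω ∂(sphereMeasure d))
      = ∫ vs : EuclideanSpace ℝ (Fin d),
          ∫ _ω : Metric.sphere (0 : EuclideanSpace ℝ (Fin d)) 1, (0 : ℝ)
            ∂(sphereMeasure d) := by
        congr 1
        funext vs
        congr 1
        funext ω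
        exact key vs ω
    _ = 0 := by simp
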